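/- Matrix form of MNC (Theorem 4.1): let G1 and G2 be finite simple graphs with adjacency matrices A1 and A2, let π : V1 → V2 be a bijection with permutation matrix M, and let i ∈ V1, j ∈ V2 be such that N_{G1}(i) or N_{G2}(j) is nonempty. Then, with all matrix arithmetic over the rationals, MNC(i,j) = (A1 · M · A2)_{ij} / ((A1 · M · 1)_i + (A2 · 1)_j − (A1 · M · A2)_{ij}), i.e., the matched neighborhood consistency of every pair (i,j) is the (i,j) entry of the matrix A1 M A2 divided elementwise by (A1 M 1) ⊗ 1 + 1 ⊗ (A2 1) − A1 M A2. -/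
import Mathlib


open Matrix

/-- Matched neighborhood consistency: the Jaccard similarity between the mapped
neighborhood `π '' N_{G1}(i)` and the neighborhood `N_{G2}(j)`. -/
noncomputable def MNC {V1 V2 : Type*} (G1 : SimpleGraph V1) (G2 : SimpleGraph V2)
    (π : V1 → V2) (i : V1) (j : V2) : ℚ :=
  (((π '' G1.neighborSet i) ∩ G2.neighborSet j).ncard : ℚ) /
    (((π '' G1.neighborSet i) ∪ G2.neighborSet j).ncard : ℚ)

/-- Theorem 4.1, matrix form of MNC: with adjacency matrices `A1`, `A2`
over `ℚ` and permutation matrix `M` encoding the bijection `π`, for every pair `(i,j)`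
with `N_{G1}(i)` or `N_{G2}(j)` nonempty,
`MNC(i,j) = (A1 M A2)_{ij} / ((A1 M 1)_i + (A2 1)_j − (A1 M A2)_{ij})`. -/
theorem mnc_matrix_form {V1 V2 : Type*} [Fintype V1] [Fintype V2]
    [DecidableEq V1] [DecidableEq V2]
    (G1 : SimpleGraph V1) (G2 : SimpleGraph V2)
    [DecidableRel G1.Adj] [DecidableRel G2.Adj]
    (π : V1 ≃ V2) (M : Matrix V1 V2 ℚ)
    (hM : ∀ (k : V1) (l : V2), M k l = if π k = l then 1 else 0)
    (i : V1) (j : V2)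
    (hne : (G1.neighborSet i).Nonempty ∨ (G2.neighborSet j).Nonempty) :
    MNC G1 G2 (⇑π) i j =
      (G1.adjMatrix ℚ * M * G2.adjMatrix ℚ) i j /
        (((G1.adjMatrix ℚ * M) *ᵥ (fun _ => (1 : ℚ))) i
          + (G2.adjMatrix ℚ *ᵥ (fun _ => (1 : ℚ))) j
          - (G1.adjMatrix ℚ * M * G2.adjMatrix ℚ) i j) := by

  have hAM : ∀ l, (G1.adjMatrix ℚ * M) i l = if G1.Adj i (π.symm l) then 1 else 0 := by
    intro l
    simp only [Matrix.mul_apply, hM, SimpleGraph.adjMatrix_apply, ite_mul, one_mul, zero_mul]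
    simp_rw [← Equiv.eq_symm_apply]
    simp_rw [← ite_and, and_comm (a := G1.Adj i _), ite_and]
    rw [Finset.sum_ite_eq' Finset.univ (π.symm l)]
    simp
  set S1 : Set V2 := ⇑π '' G1.neighborSet i with hS1def
  have hS1 : S1 = {l | G1.Adj i (π.symm l)} := by
    ext l
    simp only [hS1def, Set.mem_image, SimpleGraph.mem_neighborSet, Set.mem_setOf_eq]
    constructor
    · rintro ⟨k, hk, rfl⟩; simpa using hk
    · intro h; exact ⟨π.symm l, h, by simp⟩
  -- numerator
  have hnum : ((S1 ∩ G2.neighborSet j).ncard : ℚ)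
      = (G1.adjMatrix ℚ * M * G2.adjMatrix ℚ) i j := by
    rw [Matrix.mul_apply]
    simp_rw [hAM, SimpleGraph.adjMatrix_apply, ite_mul, one_mul, zero_mul, ← ite_and]
    rw [Finset.sum_boole]
    have : S1 ∩ G2.neighborSet j = {l | G1.Adj i (π.symm l) ∧ G2.Adj l j} := by
      rw [hS1]; ext l; simp [SimpleGraph.mem_neighborSet, SimpleGraph.adj_comm]
    rw [this, Set.ncard_eq_toFinset_card', Set.toFinset_setOf]
  have hb : ((S1).ncard : ℚ) = ((G1.adjMatrix ℚ * M) *ᵥ (fun _ => (1 : ℚ))) i := by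
    rw [Matrix.mulVec, dotProduct]
    simp_rw [hAM, mul_one]
    rw [Finset.sum_boole, hS1, Set.ncard_eq_toFinset_card', Set.toFinset_setOf]
  have hc : ((G2.neighborSet j).ncard : ℚ) = (G2.adjMatrix ℚ *ᵥ (fun _ => (1 : ℚ))) j := by
    rw [Matrix.mulVec, dotProduct]
    simp_rw [SimpleGraph.adjMatrix_apply, mul_one]
    rw [Finset.sum_boole]
    rw [Set.ncard_eq_toFinset_card']
    have ht : (G2.neighborSet j).toFinset = Finset.univ.filter (fun l => G2.Adj j l) := by
      ext l; simp [SimpleGraph.adj_comm]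
    rw [ht]
  have hUI : (S1 ∪ G2.neighborSet j).ncard + (S1 ∩ G2.neighborSet j).ncard
      = S1.ncard + (G2.neighborSet j).ncard :=
    Set.ncard_union_add_ncard_inter _ _ (Set.toFinite _) (Set.toFinite _)
  have hden : ((S1 ∪ G2.neighborSet j).ncard : ℚ)
      = ((G1.adjMatrix ℚ * M) *ᵥ (fun _ => (1 : ℚ))) i
        + (G2.adjMatrix ℚ *ᵥ (fun _ => (1 : ℚ))) j
        - (G1.adjMatrix ℚ * M * G2.adjMatrix ℚ) i j := by
    rw [← hb, ← hc, ← hnum]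
    have := congrArg (fun n : ℕ => (n : ℚ)) hUI
    push_cast at this
    linarith
  rw [show MNC G1 G2 (⇑π) i j
      = ((S1 ∩ G2.neighborSet j).ncard : ℚ) / ((S1 ∪ G2.neighborSet j).ncard : ℚ) from rfl,
    hnum, hden]
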